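/- For every byte string S, the sequence of merge applications performed by encode on S is, at every step, the lexicographically least merge application applicable to the current token sequence. Consequently, if a finite sequence of merge applications starting from the base tokenization of S has the property that each applied application is lexicographically least among those applicable to the current token sequence, and no merge application is applicable to the final token sequence, then this sequence of applications equals the sequence performed by encode on S, and its final token sequence equals encode(S). -/

import Mathlib

/-!
Formalization of a BPE tokenizer with an ordered merge list.

* `σ` is the (finite) byte alphabet, `τ` is the (finite) vocabulary of tokens.
* `base` embeds each byte as a distinct base token.
* `dec` decodes a single token to a byte string; it is extended to token
  sequences by concatenation (`decodeSeq`).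
* `merges` is the ordered merge list; each merge `(l, r, n)` replaces an
  adjacent pair `(l, r)` by the single token `n`, and satisfies
  `dec n = dec l ++ dec r`.
* `encode` turns a byte string into its base tokens and then, processing the
  merges in order, repeatedly replaces the leftmost adjacent occurrence of
  `(l, r)` by `n` until no occurrence remains, before moving to the next merge.
-/

structure BPE (σ τ : Type*) where
  base : σ → τ
  dec : τ → List σ
  merges : List (τ × τ × τ)
  base_inj : Function.Injective base
  dec_base : ∀ b, dec (base b) = [b]
  dec_merge : ∀ m ∈ merges, dec m.2.2 = dec m.1 ++ dec m.2.1

namespace BPE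

variable {σ τ : Type*} [DecidableEq τ]

/-- Decode a token sequence by concatenating the decodings of its tokens. -/
def decodeSeq (B : BPE σ τ) (T : List τ) : List σ := (T.map B.dec).flatten

/-- Replace the leftmost adjacent occurrence of `(l, r)` by `n`, if any,
also returning the starting byte position of the replaced pair. -/
def replaceLeftmost (B : BPE σ τ) (l r n : τ) : List τ → Option (ℕ × List τ)
  | [] => none
  | [_] => none
  | t :: u :: rest =>
      if t = l ∧ u = r then some (0, n :: rest)
      else (B.replaceLeftmost l r n (u :: rest)).map
        (fun p => (p.1 + (B.dec t).length, t :: p.2))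

/-- Repeatedly replace the leftmost adjacent occurrence of `(l, r)` by `n`
until no occurrence remains (the fuel, taken to be the length of the list,
suffices since every replacement shortens the list).  Also returns the list
of byte positions at which replacements were performed, in order. -/
def runMerge (B : BPE σ τ) (l r n : τ) : ℕ → List τ → List τ × List ℕ
  | 0, T => (T, [])
  | fuel + 1, T =>
    match B.replaceLeftmost l r n T with
    | none => (T, [])
    | some (p, T') =>
      let q := B.runMerge l r n fuel T'
      (q.1, p :: q.2)

/-- Process an (indexed) list of merges in order, starting from token sequence
`T`; returns the final token sequence together with the ordered list of merge
applications performed, each recorded as a pair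
(index of the merge in the merge list, starting byte position). -/
def encodeRunAux (B : BPE σ τ) : List (ℕ × τ × τ × τ) → List τ → List τ × List (ℕ × ℕ)
  | [], T => (T, [])
  | (i, l, r, n) :: ms, T =>
    let q := B.runMerge l r n T.length T
    let q' := B.encodeRunAux ms q.1
    (q'.1, q.2.map (fun p => (i, p)) ++ q'.2)

/-- The full run of the BPE encoder on a byte string `S`: the final token
sequence together with the ordered list of merge applications performed. -/
def encodeRun (B : BPE σ τ) (S : List σ) : List τ × List (ℕ × ℕ) :=
  B.encodeRunAux (B.merges.zipIdx.map Prod.swap) (S.map B.base)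

/-- BPE encoding of a byte string. -/
def encode (B : BPE σ τ) (S : List σ) : List τ := (B.encodeRun S).1

/-- The ordered list of merge applications (merge index, starting byte
position) performed during the run of `encode` on `S`. -/
def encodeApps (B : BPE σ τ) (S : List σ) : List (ℕ × ℕ) := (B.encodeRun S).2

/-- A token sequence is *valid* if it is the canonical encoding of the byte
string it decodes to. -/
def Valid (B : BPE σ τ) (T : List τ) : Prop := B.encode (B.decodeSeq T) = T

/-- The merge list is in *normal form*:
(i) each token is produced by at most one merge;
(ii) every token `t` satisfies `encode (dec t) = [t]`;
(iii) every merge occurs later in the merge list than the merges producing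
each of its two input tokens. -/
def NormalForm (B : BPE σ τ) : Prop :=
  (∀ i j (hi : i < B.merges.length) (hj : j < B.merges.length),
      (B.merges[i]'hi).2.2 = (B.merges[j]'hj).2.2 → i = j) ∧
  (∀ t : τ, B.encode (B.dec t) = [t]) ∧
  (∀ i j (hi : i < B.merges.length) (hj : j < B.merges.length),
      (B.merges[i]'hi).2.2 = (B.merges[j]'hj).1 ∨
        (B.merges[i]'hi).2.2 = (B.merges[j]'hj).2.1 → i < j)

/-- The merge application `app = (t, p)` *crosses* byte position `c` if the
token it creates (the output of merge `t`, starting at byte position `p`)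
has a byte span properly containing `c`. -/
def AppCrosses (B : BPE σ τ) (app : ℕ × ℕ) (c : ℕ) : Prop :=
  ∃ h : app.1 < B.merges.length,
    app.2 < c ∧ c < app.2 + (B.dec (B.merges[app.1]'h).2.2).length

/-- Some merge applied during the run of `encode` on `S` crosses position `c`. -/
def MergeCrossesInRun (B : BPE σ τ) (S : List σ) (c : ℕ) : Prop :=
  ∃ app ∈ B.encodeApps S, B.AppCrosses app c

/-- The token sequence `U` contains a token whose byte span properly
contains position `c`. -/
def TokenCrosses (B : BPE σ τ) (U : List τ) (c : ℕ) : Prop :=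
  ∃ k, k < U.length ∧
    (B.decodeSeq (U.take k)).length < c ∧ c < (B.decodeSeq (U.take (k + 1))).length

end BPE
namespace BPE

variable {σ τ : Type*} [DecidableEq τ]

/-- The *Valid Covering Tree* of a byte string `P`: the set of all nonempty
token sequences `T = [t₁, …, tₙ]` such that (1) `P` is a prefix of
`decode T`, (2) `decode [t₁, …, t_{n-1}]` is a prefix of `P`, and
(3) `T` is valid. -/
def VCT (B : BPE σ τ) (P : List σ) : Set (List τ) :=
  {T | T ≠ [] ∧ P <+: B.decodeSeq T ∧ B.decodeSeq T.dropLast <+: P ∧ B.Valid T}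

/-- The maximal prefix of a token sequence whose total decoded length is at
most `k`, i.e. the tokens whose byte spans end at or before position `k`
(together with their spans, which are determined by the preceding tokens). -/
def spanPrefix (B : BPE σ τ) (k : ℕ) : List τ → List τ
  | [] => []
  | t :: T =>
      if (B.dec t).length ≤ k then t :: B.spanPrefix (k - (B.dec t).length) T
      else []

/-- `L₀` is a *lookahead bound* for the tokenizer if whenever two byte strings
agree on their first `k + L₀` bytes, the tokens of their encodings whose byte
spans end at or before position `k` coincide (with identical spans). -/
def LookaheadBound (B : BPE σ τ) (L₀ : ℕ) : Prop :=
  ∀ (x x' : List σ) (k : ℕ), x.take (k + L₀) = x'.take (k + L₀) →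
    B.spanPrefix k (B.encode x) = B.spanPrefix k (B.encode x')

/-- `U'` is the minimal covering prefix of `U` with respect to `P`: the
shortest prefix of `U` whose decoding has `P` as a prefix. -/
def IsMinCover (B : BPE σ τ) (P : List σ) (U U' : List τ) : Prop :=
  U' <+: U ∧ P <+: B.decodeSeq U' ∧
    ∀ U'' : List τ, U'' <+: U → P <+: B.decodeSeq U'' → U'.length ≤ U''.length

/-- The pair `(l, r)` occurs adjacently in `T`. -/
def PairAdj (l r : τ) (T : List τ) : Prop := ∃ A C, T = A ++ l :: r :: C

/-- The merge application `a = (t, i)` (merge index `t`, starting byte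
position `i` of the left token) is applicable to the token sequence `T`. -/
def Applicable (B : BPE σ τ) (a : ℕ × ℕ) (T : List τ) : Prop :=
  ∃ h : a.1 < B.merges.length, ∃ A C : List τ,
    T = A ++ (B.merges[a.1]'h).1 :: (B.merges[a.1]'h).2.1 :: C ∧
      (B.decodeSeq A).length = a.2

/-- `T'` is obtained from `T` by performing the merge application `a = (t, i)`:
the input pair of merge `t`, occurring adjacently in `T` with the left token
starting at byte position `i`, is replaced by the output token of merge `t`. -/
def ApplyApp (B : BPE σ τ) (a : ℕ × ℕ) (T T' : List τ) : Prop :=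
  ∃ h : a.1 < B.merges.length, ∃ A C : List τ,
    T = A ++ (B.merges[a.1]'h).1 :: (B.merges[a.1]'h).2.1 :: C ∧
      (B.decodeSeq A).length = a.2 ∧
      T' = A ++ (B.merges[a.1]'h).2.2 :: C

/-- Lexicographic order on merge applications `(t, i)`. -/
def appLE (a a' : ℕ × ℕ) : Prop :=
  a.1 < a'.1 ∨ (a.1 = a'.1 ∧ a.2 ≤ a'.2)

/-- `GreedyChain B T₀ apps T` holds when the sequence of merge applications
`apps` leads from token sequence `T₀` to token sequence `T`, and each applied
application is lexicographically least among those applicable to the current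
token sequence. -/
inductive GreedyChain (B : BPE σ τ) : List τ → List (ℕ × ℕ) → List τ → Prop
  | nil (T : List τ) : GreedyChain B T [] T
  | cons {T T' Tf : List τ} {a : ℕ × ℕ} {apps : List (ℕ × ℕ)} :
      B.ApplyApp a T T' →
      (∀ a', B.Applicable a' T → appLE a a') →
      GreedyChain B T' apps Tf →
      GreedyChain B T (a :: apps) Tf

end BPE
namespace BPE

variable {σ τ : Type*} [DecidableEq τ]

lemma decodeSeq_cons (B : BPE σ τ) (t : τ) (T : List τ) :
    B.decodeSeq (t :: T) = B.dec t ++ B.decodeSeq T := by simp [decodeSeq]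

lemma decodeSeq_append (B : BPE σ τ) (T U : List τ) :
    B.decodeSeq (T ++ U) = B.decodeSeq T ++ B.decodeSeq U := by simp [decodeSeq]

/-- occurrence of adjacent pair -/
def Occ (l r : τ) (T : List τ) : Prop := ∃ A C, T = A ++ l :: r :: C

lemma occ_cons {l r t : τ} {T : List τ} :
    Occ l r (t :: T) ↔ (t = l ∧ ∃ C, T = r :: C) ∨ Occ l r T := by
  constructor
  · rintro ⟨A, C, h⟩
    cases A with
    | nil =>
      simp only [List.nil_append, List.cons.injEq] at h
      exact Or.inl ⟨h.1, C, h.2⟩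
    | cons a A =>
      simp only [List.cons_append, List.cons.injEq] at h
      exact Or.inr ⟨A, C, h.2⟩
  · rintro (⟨rfl, C, rfl⟩ | ⟨A, C, rfl⟩)
    · exact ⟨[], C, rfl⟩
    · exact ⟨t :: A, C, rfl⟩

lemma not_occ_nil (l r : τ) : ¬ Occ l r ([] : List τ) := by
  rintro ⟨A, C, h⟩; cases A <;> simp at h

lemma not_occ_singleton (l r t : τ) : ¬ Occ l r [t] := by
  rintro ⟨A, C, h⟩
  cases A with
  | nil => simp at h
  | cons a A => cases A <;> simp at h

end BPE
namespace BPE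

variable {σ τ : Type*} [DecidableEq τ]

lemma replaceLeftmost_none {B : BPE σ τ} {l r n : τ} :
    ∀ {T : List τ}, B.replaceLeftmost l r n T = none → ¬ Occ l r T
  | [], _ => not_occ_nil l r
  | [t], _ => not_occ_singleton l r t
  | t :: u :: rest, h => by
    rw [replaceLeftmost] at h
    split at h
    · exact absurd h (by simp)
    · rename_i hne
      rw [Option.map_eq_none_iff] at h
      intro hocc
      rcases occ_cons.1 hocc with ⟨rfl, C, hC⟩ | hocc'
      · exact hne ⟨rfl, by cases hC; rfl⟩
      · exact replaceLeftmost_none h hocc'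

lemma replaceLeftmost_some {B : BPE σ τ} {l r n : τ} :
    ∀ {T : List τ} {p : ℕ} {T' : List τ},
      B.replaceLeftmost l r n T = some (p, T') →
      ∃ A C, T = A ++ l :: r :: C ∧ T' = A ++ n :: C ∧ (B.decodeSeq A).length = p ∧
        ∀ A' C', T = A' ++ l :: r :: C' → p ≤ (B.decodeSeq A').length
  | [], _, _, h => by simp [replaceLeftmost] at h
  | [t], _, _, h => by simp [replaceLeftmost] at h
  | t :: u :: rest, p, T', h => by
    rw [replaceLeftmost] at h
    split at h
    · rename_i heq
      obtain ⟨rfl, rfl⟩ := heq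
      obtain ⟨rfl, rfl⟩ : 0 = p ∧ n :: rest = T' := by
        simpa using h
      exact ⟨[], rest, rfl, rfl, rfl, fun A' C' _ => Nat.zero_le _⟩
    · rename_i hne
      rw [Option.map_eq_some_iff] at h
      obtain ⟨⟨p₀, T₀⟩, hrec, heq⟩ := h
      obtain ⟨rfl, rfl⟩ : p = p₀ + (B.dec t).length ∧ T' = t :: T₀ := by
        simpa using heq.symm
      obtain ⟨A, C, hT, hT', hp, hmin⟩ := replaceLeftmost_some hrec
      refine ⟨t :: A, C, by rw [List.cons_append, ← hT], by rw [List.cons_append, ← hT'],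
        by rw [decodeSeq_cons]; simp [← hp]; omega, ?_⟩
      intro A' C' hA'
      cases A' with
      | nil =>
        simp only [List.nil_append, List.cons.injEq] at hA'
        exact absurd ⟨hA'.1, hA'.2.1⟩ hne
      | cons a A'' =>
        simp only [List.cons_append, List.cons.injEq] at hA'
        obtain ⟨rfl, hA''⟩ := hA'
        have := hmin A'' C' hA''
        rw [decodeSeq_cons]
        simp only [List.length_append]
        omega

/-- replacement preserves absence of other pairs -/
lemma not_occ_replace {l r n l' r' : τ} (hl : n ≠ l') (hr : n ≠ r') :
    ∀ (A : List τ) {C : List τ}, ¬ Occ l' r' (A ++ l :: r :: C) → ¬ Occ l' r' (A ++ n :: C)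
  | [], C, h => by
    intro hocc
    rcases occ_cons.1 hocc with ⟨rfl, _, _⟩ | hocc'
    · exact hl rfl
    · exact h (occ_cons.2 (Or.inr (occ_cons.2 (Or.inr hocc'))))
  | a :: A, C, h => by
    intro hocc
    rcases occ_cons.1 hocc with ⟨rfl, D, hD⟩ | hocc'
    · cases A with
      | nil =>
        injection hD with h1 h2
        exact hr h1
      | cons a' A' =>
        injection hD with h1 h2
        exact h (occ_cons.2 (Or.inl ⟨rfl, A' ++ l :: r :: C, by simp [h1]⟩))
    · exact not_occ_replace hl hr A (fun hx => h (occ_cons.2 (Or.inr hx))) hocc'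

end BPE
namespace BPE

variable {σ τ : Type*} [DecidableEq τ]

/-- no pair of a merge of index `< k` occurs in `T` -/
def NoOccBelow (B : BPE σ τ) (k : ℕ) (T : List τ) : Prop :=
  ∀ j (hj : j < B.merges.length), j < k →
    ¬ Occ (B.merges[j]'hj).1 (B.merges[j]'hj).2.1 T

lemma GreedyChain.append {B : BPE σ τ} {T T' T'' : List τ} {as bs : List (ℕ × ℕ)}
    (h1 : B.GreedyChain T as T') (h2 : B.GreedyChain T' bs T'') :
    B.GreedyChain T (as ++ bs) T'' := by
  induction h1 with
  | nil => exact h2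
  | cons ha hmin _ ih => exact GreedyChain.cons ha hmin (ih h2)

lemma runMerge_spec {B : BPE σ τ} (hNF : B.NormalForm) {i : ℕ}
    (hi : i < B.merges.length) {l r n : τ} (hm : B.merges[i]'hi = (l, r, n)) :
    ∀ (fuel : ℕ) (T : List τ), T.length ≤ fuel → B.NoOccBelow i T →
      B.GreedyChain T (((B.runMerge l r n fuel T).2).map (fun p => (i, p)))
        (B.runMerge l r n fuel T).1 ∧
      B.NoOccBelow (i + 1) (B.runMerge l r n fuel T).1
  | 0, T, hlen, hI => by
    have : T = [] := List.length_eq_zero_iff.1 (Nat.le_zero.1 hlen)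
    subst this
    exact ⟨GreedyChain.nil [], fun j hj _ => not_occ_nil _ _⟩
  | fuel + 1, T, hlen, hI => by
    rw [runMerge]
    cases hrep : B.replaceLeftmost l r n T with
    | none =>
      refine ⟨GreedyChain.nil T, fun j hj hji => ?_⟩
      rcases Nat.lt_or_ge j i with hj' | hj'
      · exact hI j hj hj'
      · have : j = i := le_antisymm (Nat.lt_succ_iff.1 hji) hj'
        subst this
        rw [hm]
        exact replaceLeftmost_none hrep
    | some q =>
      obtain ⟨p, T'⟩ := q
      obtain ⟨A, C, hT, hT', hp, hmin⟩ := replaceLeftmost_some hrep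
      -- invariant for T'
      have hI' : B.NoOccBelow i T' := by
        intro j hj hji
        have hnl : n ≠ (B.merges[j]'hj).1 := by
          intro he
          have := hNF.2.2 i j hi hj (Or.inl (by rw [hm]; exact he))
          omega
        have hnr : n ≠ (B.merges[j]'hj).2.1 := by
          intro he
          have := hNF.2.2 i j hi hj (Or.inr (by rw [hm]; exact he))
          omega
        rw [hT']
        exact not_occ_replace hnl hnr A (hT ▸ hI j hj hji)
      have hlen' : T'.length ≤ fuel := by
        have h1 : T.length = A.length + C.length + 2 := by simp [hT]; omega
        have h2 : T'.length = A.length + C.length + 1 := by simp [hT']; omega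
        omega
      obtain ⟨hchain, hfin⟩ := runMerge_spec hNF hi hm fuel T' hlen' hI'
      refine ⟨?_, hfin⟩
      simp only [List.map_cons]
      refine GreedyChain.cons ⟨hi, A, C, by rw [hm]; exact hT, hp, by rw [hm]; exact hT'⟩
        ?_ hchain
      rintro ⟨j, q⟩ ⟨hj, A', C', hT2, hq⟩
      rcases lt_trichotomy i j with hij | hij | hij
      · exact Or.inl hij
      · subst hij
        refine Or.inr ⟨rfl, ?_⟩
        rw [hm] at hT2
        have := hmin A' C' hT2
        omega
      · exact absurd ⟨A', C', hT2⟩ (hI j hj hij)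

lemma encodeRunAux_spec {B : BPE σ τ} (hNF : B.NormalForm) :
    ∀ (ms : List (ℕ × τ × τ × τ)) (i : ℕ) (T : List τ),
      ms = (B.merges.zipIdx.map Prod.swap).drop i → B.NoOccBelow i T →
      B.GreedyChain T (B.encodeRunAux ms T).2 (B.encodeRunAux ms T).1 ∧
        B.NoOccBelow B.merges.length (B.encodeRunAux ms T).1
  | [], i, T, hms, hI => by
    refine ⟨GreedyChain.nil T, fun j hj _ => hI j hj ?_⟩
    have hle : (B.merges.zipIdx.map Prod.swap).length ≤ i := by
      have := congrArg List.length hms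
      simp only [List.length_nil, List.length_drop] at this
      omega
    simp only [List.length_map, List.length_zipIdx] at hle
    omega
  | (i', l, r, n) :: ms, i, T, hms, hI => by
    have hilt : i < (B.merges.zipIdx.map Prod.swap).length := by
      by_contra hc
      push_neg at hc
      rw [List.drop_eq_nil_of_le hc] at hms
      exact absurd hms (by simp)
    have hi : i < B.merges.length := by simpa using hilt
    have hdrop : (B.merges.zipIdx.map Prod.swap).drop i = (B.merges.zipIdx.map Prod.swap)[i] :: (B.merges.zipIdx.map Prod.swap).drop (i + 1) :=
      List.drop_eq_getElem_cons hilt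
    rw [hdrop, List.getElem_map, List.getElem_zipIdx, Prod.swap_prod_mk, Nat.zero_add] at hms
    obtain ⟨h1, h2⟩ := List.cons.injEq _ _ _ _ ▸ hms
    have h1i : i' = i := congrArg Prod.fst h1
    subst h1i
    have hm : B.merges[i']'hi = (l, r, n) := (congrArg Prod.snd h1).symm
    rw [encodeRunAux]
    obtain ⟨hc1, hI1⟩ := runMerge_spec hNF hi hm T.length T le_rfl hI
    obtain ⟨hc2, hI2⟩ := encodeRunAux_spec hNF ms (i' + 1) _ h2 hI1
    exact ⟨GreedyChain.append hc1 hc2, hI2⟩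

end BPE
namespace BPE

variable {σ τ : Type*} [DecidableEq τ]

lemma appLE_antisymm {a b : ℕ × ℕ} (h1 : appLE a b) (h2 : appLE b a) : a = b := by
  obtain ⟨a1, a2⟩ := a
  obtain ⟨b1, b2⟩ := b
  rcases h1 with h1 | ⟨h1, h1'⟩ <;> rcases h2 with h2 | ⟨h2, h2'⟩ <;>
    simp_all <;> omega

lemma Applicable.of_applyApp {B : BPE σ τ} {a : ℕ × ℕ} {T T' : List τ}
    (h : B.ApplyApp a T T') : B.Applicable a T := by
  obtain ⟨h, A, C, hT, hp, _⟩ := h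
  exact ⟨h, A, C, hT, hp⟩

/-- helper for determinism: prefixes with equal decoded lengths coincide -/
lemma det_helper {B : BPE σ τ} {l r : τ} :
    ∀ {A1 C1 A2 C2 : List τ}, A1 <+: A2 →
      A1 ++ l :: r :: C1 = A2 ++ l :: r :: C2 →
      (B.decodeSeq A1).length = (B.decodeSeq A2).length →
      (∀ t ∈ A1 ++ l :: r :: C1, B.dec t ≠ []) → A1 = A2 := by
  intro A1 C1 A2 C2 hpre heq hlen hne
  obtain ⟨D, rfl⟩ := hpre
  cases D with
  | nil => simp
  | cons d D' =>
    exfalso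
    rw [List.append_assoc] at heq
    have heq' : l :: r :: C1 = (d :: D') ++ l :: r :: C2 := by
      exact List.append_cancel_left heq
    have hd : d = l := by
      rw [List.cons_append] at heq'
      exact (List.cons.injEq _ _ _ _ ▸ heq').1.symm
    have hlen' : (B.decodeSeq (d :: D')).length = 0 := by
      rw [decodeSeq_append, List.length_append] at hlen
      omega
    rw [decodeSeq_cons] at hlen'
    simp only [List.length_append, Nat.add_eq_zero, List.length_eq_zero_iff] at hlen'
    exact hne d (by subst hd; exact List.mem_append_right _ (List.mem_cons_self)) hlen'.1
    -- d = l is a member of A1 ++ l :: r :: C1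

lemma applyApp_det {B : BPE σ τ} {a : ℕ × ℕ} {T T1 T2 : List τ}
    (hne : ∀ t ∈ T, B.dec t ≠ [])
    (h1 : B.ApplyApp a T T1) (h2 : B.ApplyApp a T T2) : T1 = T2 := by
  obtain ⟨h, A1, C1, hT1, hp1, hT1'⟩ := h1
  obtain ⟨h', A2, C2, hT2, hp2, hT2'⟩ := h2
  have heq : A1 ++ (B.merges[a.1]'h).1 :: (B.merges[a.1]'h).2.1 :: C1
      = A2 ++ (B.merges[a.1]'h).1 :: (B.merges[a.1]'h).2.1 :: C2 := by
    rw [← hT1]; exact hT2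
  have hlen : (B.decodeSeq A1).length = (B.decodeSeq A2).length := by omega
  have hA : A1 = A2 := by
    rcases List.prefix_or_prefix_of_prefix (List.prefix_append A1 _)
        (heq ▸ List.prefix_append A2 _) with hp | hp
    · exact det_helper hp heq hlen (hT1 ▸ hne)
    · exact (det_helper hp heq.symm hlen.symm (hT2 ▸ hne)).symm
  subst hA
  have hC : C1 = C2 := by
    have h2 := List.append_cancel_left heq
    simpa using h2
  rw [hT1', hT2', hC]

lemma applyApp_nonempty {B : BPE σ τ} {a : ℕ × ℕ} {T T' : List τ}
    (hne : ∀ t ∈ T, B.dec t ≠ []) (h : B.ApplyApp a T T') :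
    ∀ t ∈ T', B.dec t ≠ [] := by
  obtain ⟨h, A, C, hT, hp, hT'⟩ := h
  intro t ht
  rw [hT'] at ht
  rcases List.mem_append.1 ht with htA | htc
  · exact hne t (hT ▸ List.mem_append_left _ htA)
  · rcases List.mem_cons.1 htc with rfl | htC
    · have hmem : B.merges[a.1]'h ∈ B.merges := List.getElem_mem _
      rw [B.dec_merge _ hmem]
      have hl : B.dec (B.merges[a.1]'h).1 ≠ [] :=
        hne _ (hT ▸ List.mem_append_right _ (List.mem_cons_self))
      simp [hl]
    · exact hne t (hT ▸ List.mem_append_right _ (List.mem_cons_of_mem _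
        (List.mem_cons_of_mem _ htC)))

lemma greedy_unique {B : BPE σ τ} :
    ∀ (apps1 : List (ℕ × ℕ)) {T Tf1 Tf2 : List τ} {apps2 : List (ℕ × ℕ)},
      (∀ t ∈ T, B.dec t ≠ []) →
      B.GreedyChain T apps1 Tf1 → B.GreedyChain T apps2 Tf2 →
      (∀ a, ¬ B.Applicable a Tf1) → (∀ a, ¬ B.Applicable a Tf2) →
      apps2 = apps1 ∧ Tf2 = Tf1
  | [], T, Tf1, Tf2, apps2, hne, h1, h2, hf1, hf2 => by
    cases h1
    cases h2 with
    | nil => exact ⟨rfl, rfl⟩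
    | cons hb hmin hchain => exact absurd (Applicable.of_applyApp hb) (hf1 _)
  | a :: apps1, T, Tf1, Tf2, apps2, hne, h1, h2, hf1, hf2 => by
    cases h1 with
    | cons ha hmin1 hchain1 =>
      cases h2 with
      | nil => exact absurd (Applicable.of_applyApp ha) (hf2 _)
      | cons hb hmin2 hchain2 =>
        have hab := appLE_antisymm (hmin1 _ (Applicable.of_applyApp hb))
          (hmin2 a (Applicable.of_applyApp ha))
        cases hab
        have hTT := applyApp_det hne ha hb
        cases hTT
        obtain ⟨he1, he2⟩ := greedy_unique apps1 (applyApp_nonempty hne ha)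
          hchain1 hchain2 hf1 hf2
        exact ⟨by rw [he1], he2⟩

end BPE
namespace BPE

variable {σ τ : Type*} [DecidableEq τ]

lemma encode_run_main {B : BPE σ τ} (hNF : B.NormalForm) (S : List σ) :
    B.GreedyChain (S.map B.base) (B.encodeApps S) (B.encode S) ∧
      ∀ a, ¬ B.Applicable a (B.encode S) := by
  obtain ⟨hchain, hfin⟩ := encodeRunAux_spec hNF (B.merges.zipIdx.map Prod.swap) 0 (S.map B.base) rfl
    (fun j hj h0 => absurd h0 (Nat.not_lt_zero j))
  refine ⟨hchain, ?_⟩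
  rintro ⟨j, q⟩ ⟨hj, A, C, hT, _⟩
  exact hfin j hj hj ⟨A, C, hT⟩

end BPE
/-- For every byte string `S`, the sequence of merge applications performed by
`encode` on `S` is, at every step, the lexicographically least merge
application applicable to the current token sequence (and no merge application
is applicable to the final token sequence `encode S`).  Consequently, if a
finite sequence of merge applications starting from the base tokenization of
`S` has the property that each applied application is lexicographically least
among those applicable to the current token sequence, and no merge application
is applicable to the final token sequence, then this sequence of applications
equals the sequence performed by `encode` on `S`, and its final token sequence
equals `encode S`. -/
theorem BPE.encode_run_greedy_least {σ τ : Type*} [DecidableEq τ]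
    (B : BPE σ τ) (hNF : B.NormalForm) (S : List σ) :
    (B.GreedyChain (S.map B.base) (B.encodeApps S) (B.encode S) ∧
        ∀ a, ¬ B.Applicable a (B.encode S)) ∧
      (∀ (apps : List (ℕ × ℕ)) (Tf : List τ),
        B.GreedyChain (S.map B.base) apps Tf →
        (∀ a, ¬ B.Applicable a Tf) →
        apps = B.encodeApps S ∧ Tf = B.encode S) := by

  constructor
  · exact BPE.encode_run_main hNF S
  · intro apps Tf hchain hfin
    obtain ⟨hc1, hf1⟩ := BPE.encode_run_main hNF S
    have hne : ∀ t ∈ S.map B.base, B.dec t ≠ [] := by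
      intro t ht
      obtain ⟨b, _, rfl⟩ := List.mem_map.1 ht
      rw [B.dec_base]
      simp
    exact BPE.greedy_unique (B.encodeApps S) hne hc1 hchain hf1 hfin
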